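/- Let φ_k be C¹ on an open convex set V ⊆ ℝ² with |∂φ_k/∂u| ≥ A > 1 and |∂φ_k/∂v| ≤ M where 0 < M < A−1. Let γ = A^(−1/2) and define T_k(x,y) = (y/γ, γφ_k(x, y/γ)) on the compressed set V' = {(x, γy) : (x,y) ∈ V}. Then for all (x,y), (x',y') ∈ V' with the segment [(x,y),(x',y')] ⊆ V', one has ‖T_k(x,y) − T_k(x',y')‖² ≥ s⁻² ‖(x,y) − (x',y')‖², with s = ((2A + M² − M√(M²+4A))/2)^(−1/2) < 1. -/

import Mathlib

lemma core_ineq (A M t a b dx dv : ℝ) (hA : 1 < A) (hM0 : 0 < M)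
    (htA : t^2 + M*t = A) (ht0 : 0 < t)
    (ha : A^2 ≤ a^2) (hb : b^2 ≤ M^2) :
    t^2*(A*dx^2 + dv^2) ≤ A*dv^2 + (a*dx + b*dv)^2 := by
  have hA0 : (0:ℝ) < A := lt_trans one_pos hA
  have hAt : A^2 - t^2*A = A*(M*t) := by linear_combination (-A) * htA
  have hc : 0 < a^2 - t^2*A := by
    have := mul_pos hA0 (mul_pos hM0 ht0)
    linarith
  have h2 : M*t*A^2 - M*t*(t^2*A) - t^2*A*M^2 = 0 := by
    linear_combination (-(A*M*t)) * htA
  have hE : 0 ≤ M*t*(a^2 - t^2*A) - t^2*A*b^2 := by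
    nlinarith [mul_le_mul_of_nonneg_left ha (le_of_lt (mul_pos hM0 ht0)),
      mul_nonneg (mul_nonneg (sq_nonneg t) hA0.le) (sub_nonneg.mpr hb), h2]
  have hE0 : 0 ≤ (a^2 - t^2*A)*(b^2 + A - t^2) - a^2*b^2 := by
    have heq : (a^2 - t^2*A)*(b^2 + A - t^2) - a^2*b^2
        = M*t*(a^2 - t^2*A) - t^2*A*b^2 := by
      linear_combination (-(a^2 - t^2*A)) * htA
    rw [heq]; exact hE
  have hq : 0 ≤ (a^2 - t^2*A) * (A*dv^2 + (a*dx+b*dv)^2 - t^2*(A*dx^2+dv^2)) := by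
    nlinarith [sq_nonneg ((a^2-t^2*A)*dx + a*b*dv), mul_nonneg hE0 (sq_nonneg dv)]
  nlinarith [hq, hc]

/-- Proposition `dilatance1`: uniform expansion of the conjugated branch map
T_k(x,y) = (y/γ, γ φ_k(x, y/γ)) on the compressed domain, measured with the
Euclidean (squared) distance. -/
theorem stmt_7 (A M γ s : ℝ) (hA : 1 < A) (hM : M ∈ Set.Ioo (0:ℝ) (A - 1))
    (hγ : γ = A ^ (-(1/2) : ℝ))
    (hs : s = ((2*A + M^2 - M * Real.sqrt (M^2 + 4*A)) / 2) ^ (-(1/2) : ℝ))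
    (V : Set (ℝ × ℝ)) (hV : IsOpen V) (hVconv : Convex ℝ V)
    (φ : ℝ × ℝ → ℝ) (D : ℝ × ℝ → (ℝ × ℝ) →L[ℝ] ℝ)
    (hφ : ∀ p ∈ V, HasFDerivAt φ (D p) p)
    (hDu : ∀ p ∈ V, A ≤ |D p (1, 0)|)
    (hDv : ∀ p ∈ V, |D p (0, 1)| ≤ M)
    (V' : Set (ℝ × ℝ)) (hV' : V' = (fun p : ℝ × ℝ => (p.1, γ * p.2)) '' V)
    (T : ℝ × ℝ → ℝ × ℝ)
    (hT : ∀ p : ℝ × ℝ, T p = (p.2 / γ, γ * φ (p.1, p.2 / γ))) :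
    ∀ z ∈ V', ∀ z' ∈ V', segment ℝ z z' ⊆ V' →
      s⁻¹ ^ 2 * ((z.1 - z'.1) ^ 2 + (z.2 - z'.2) ^ 2) ≤
        ((T z).1 - (T z').1) ^ 2 + ((T z).2 - (T z').2) ^ 2 := by
  obtain ⟨hM0, hM1⟩ := hM
  have hA0 : (0:ℝ) < A := lt_trans one_pos hA
  set t : ℝ := (Real.sqrt (M^2 + 4*A) - M) / 2 with htdef
  have hsq : Real.sqrt (M^2+4*A) ^ 2 = M^2 + 4*A := Real.sq_sqrt (by positivity)
  have hMlt : M < Real.sqrt (M^2+4*A) := by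
    nlinarith [Real.sqrt_nonneg (M^2+4*A), hsq]
  have ht0 : 0 < t := by rw [htdef]; linarith
  have htA : t^2 + M*t = A := by
    rw [htdef]; linear_combination (1/4 : ℝ) * hsq
  have hlam : (2*A + M^2 - M * Real.sqrt (M^2 + 4*A)) / 2 = t^2 := by
    rw [htdef]; linear_combination (-1/4 : ℝ) * hsq
  have hlam0 : (0:ℝ) < t^2 := by positivity
  -- s⁻¹ ^ 2 = t ^ 2
  have hsinv : s⁻¹ = t := by
    rw [hs, hlam, Real.rpow_neg hlam0.le, inv_inv, ← Real.sqrt_eq_rpow,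
      Real.sqrt_sq ht0.le]
  have hs2 : s⁻¹ ^ 2 = t^2 := by rw [hsinv]
  have hγ0 : 0 < γ := by rw [hγ]; exact Real.rpow_pos_of_pos hA0 _
  have hγ2 : γ^2 * A = 1 := by
    have : γ^2 = A⁻¹ := by
      rw [hγ, ← Real.rpow_natCast (A ^ (-(1/2) : ℝ)) 2, ← Real.rpow_mul hA0.le]
      norm_num [Real.rpow_neg_one]
    rw [this]; field_simp
  intro z hz z' hz' hseg
  rw [hV'] at hz hz'
  obtain ⟨p, hp, rfl⟩ := hz
  obtain ⟨p', hp', rfl⟩ := hz'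
  -- the segment in V
  have hsegV : segment ℝ p p' ⊆ V := by
    intro q hq
    obtain ⟨u, w, hu, hw, huw, rfl⟩ := hq
    have hmem : ((u • p + w • p').1, γ * (u • p + w • p').2) ∈
        segment ℝ (p.1, γ * p.2) (p'.1, γ * p'.2) := by
      refine ⟨u, w, hu, hw, huw, ?_⟩
      simp [Prod.ext_iff, smul_eq_mul]
      try ring
    have := hseg hmem
    rw [hV'] at this
    obtain ⟨r, hr, heq⟩ := this
    simp only [Prod.mk.injEq] at heq
    have h2' : r.2 = (u • p + w • p').2 := mul_left_cancel₀ (ne_of_gt hγ0) heq.2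
    have : r = u • p + w • p' := Prod.ext heq.1 h2'
    rwa [← this]
  by_cases hpp : p = p'
  · subst hpp; simp
  -- evaluate T
  have hTz : ∀ q : ℝ × ℝ, T (q.1, γ * q.2) = (q.2, γ * φ q) := by
    intro q
    rw [hT]
    simp only
    rw [mul_div_cancel_left₀ _ (ne_of_gt hγ0)]
  rw [hTz p, hTz p']
  -- MVT
  set d : ℝ × ℝ := p - p' with hd
  set ℓ : ℝ → ℝ × ℝ := fun u => p' + u • d with hℓ
  have hℓV : ∀ u ∈ Set.Icc (0:ℝ) 1, ℓ u ∈ V := by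
    intro u hu
    apply hsegV
    rw [segment_symm, segment_eq_image']
    exact ⟨u, hu, rfl⟩
  have hℓcont : Continuous ℓ := by
    apply Continuous.add continuous_const
    exact (continuous_id.smul continuous_const)
  have hgderiv : ∀ u ∈ Set.Ioo (0:ℝ) 1,
      HasDerivAt (fun u => φ (ℓ u)) (D (ℓ u) d) u := by
    intro u hu
    have h1 : HasDerivAt ℓ d u := by
      have := ((hasDerivAt_id u).smul_const d).const_add p'
      simpa [hℓ] using this
    have h2 := hφ (ℓ u) (hℓV u (Set.mem_Icc_of_Ioo hu))
    exact h2.comp_hasDerivAt u h1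
  have hgcont : ContinuousOn (fun u => φ (ℓ u)) (Set.Icc 0 1) := by
    intro u hu
    exact ((hφ (ℓ u) (hℓV u hu)).continuousAt.comp hℓcont.continuousAt).continuousWithinAt
  obtain ⟨c, hc01, hcval⟩ := exists_hasDerivAt_eq_slope (fun u => φ (ℓ u))
    (fun u => D (ℓ u) d) (by norm_num : (0:ℝ) < 1) hgcont hgderiv
  have hcV : ℓ c ∈ V := hℓV c (Set.mem_Icc_of_Ioo hc01)
  have hφdiff : φ p - φ p' = D (ℓ c) d := by
    have h0 : ℓ 0 = p' := by simp [hℓ]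
    have h1 : ℓ 1 = p := by simp [hℓ, hd]
    rw [hcval, h0, h1]
    norm_num
  set a : ℝ := D (ℓ c) (1, 0) with ha
  set b : ℝ := D (ℓ c) (0, 1) with hb
  have hDd : D (ℓ c) d = a * d.1 + b * d.2 := by
    conv_lhs => rw [show d = d.1 • ((1:ℝ), (0:ℝ)) + d.2 • ((0:ℝ), (1:ℝ)) by
      simp [Prod.ext_iff]]
    rw [map_add, map_smul, map_smul, smul_eq_mul, smul_eq_mul]
    ring
  have haA : A^2 ≤ a^2 := by
    have := hDu (ℓ c) hcV
    calc A^2 ≤ |a|^2 := by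
          apply pow_le_pow_left₀ hA0.le this
      _ = a^2 := sq_abs a
  have hbM : b^2 ≤ M^2 := by
    have h := hDv (ℓ c) hcV
    calc b^2 = |b|^2 := (sq_abs b).symm
      _ ≤ M^2 := by apply pow_le_pow_left₀ (abs_nonneg b) h
  have key := core_ineq A M t a b d.1 d.2 hA hM0 htA ht0 haA hbM
  have hd1 : d.1 = p.1 - p'.1 := rfl
  have hd2 : d.2 = p.2 - p'.2 := rfl
  have hφval : γ * φ p - γ * φ p' = γ * (a * d.1 + b * d.2) := by
    rw [← mul_sub, hφdiff, hDd]
  rw [hs2]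
  dsimp only
  rw [hφval]
  have key2 := mul_le_mul_of_nonneg_left key (sq_nonneg γ)
  have key3 : t^2*(γ^2*A*d.1^2 + γ^2*d.2^2) ≤ γ^2*A*d.2^2 + γ^2*(a*d.1+b*d.2)^2 := by
    calc t^2*(γ^2*A*d.1^2 + γ^2*d.2^2) = γ^2*(t^2*(A*d.1^2 + d.2^2)) := by ring
      _ ≤ γ^2*(A*d.2^2 + (a*d.1+b*d.2)^2) := key2
      _ = γ^2*A*d.2^2 + γ^2*(a*d.1+b*d.2)^2 := by ring
  rw [hγ2] at key3
  calc t^2 * ((p.1 - p'.1)^2 + (γ*p.2 - γ*p'.2)^2)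
      = t^2*(1*d.1^2 + γ^2*d.2^2) := by rw [← hd1, hd2]; ring
    _ ≤ 1*d.2^2 + γ^2*(a*d.1+b*d.2)^2 := key3
    _ = (p.2 - p'.2)^2 + (γ*(a*d.1+b*d.2))^2 := by rw [hd2]; ring
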